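/- Let H be a Hilbert space, x ∈ H, and ρ : [0,∞) → ℝ be differentiable on (0,∞) with ψ = ρ', ρ(0) = 0, ρ(x)/x → 0 as x → 0, and with φ(t) = ψ(t)/t having a finite limit φ(0) at 0. Then for every g, h ∈ H, the function α ↦ ρ(‖x − (g + αh)‖) is differentiable at every α with derivative −φ(‖x − (g+αh)‖)·⟨x − (g+αh), h⟩. -/

import Mathlib

open Filter Set

theorem gateaux_derivative_of_robust_loss
    {H : Type*} [NormedAddCommGroup H] [InnerProductSpace ℝ H] [CompleteSpace H]
    (x g h : H) (ρ ψ φ : ℝ → ℝ)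
    (hρ0 : ρ 0 = 0)
    (hderiv : ∀ t > (0 : ℝ), HasDerivAt ρ (ψ t) t)
    (hρlim : Filter.Tendsto (fun t => ρ t / t) (nhdsWithin 0 (Set.Ioi 0)) (nhds 0))
    (hφdef : ∀ t > (0 : ℝ), φ t = ψ t / t)
    (hφ0 : Filter.Tendsto (fun t => ψ t / t) (nhdsWithin 0 (Set.Ioi 0)) (nhds (φ 0))) :
    ∀ α : ℝ, HasDerivAt (fun a : ℝ => ρ ‖x - (g + a • h)‖)
      (-(φ ‖x - (g + α • h)‖ * (inner ℝ (x - (g + α • h)) h : ℝ))) α := by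
  intro α
  set u : H := x - (g + α • h) with hu
  have hF : HasDerivAt (fun a : ℝ => x - (g + a • h)) (-h) α := by
    have hs : HasDerivAt (fun a : ℝ => a • h) h α := by
      simpa using (hasDerivAt_id α).smul_const h
    have h2 := (hasDerivAt_const α (x - g)).sub hs
    rw [zero_sub] at h2
    exact h2.congr_of_eventuallyEq (Filter.Eventually.of_forall fun a => by simp only [Pi.sub_apply]; abel)
  by_cases hu0 : u = 0
  · -- degenerate case: derivative is 0
    have hxg : x - g = α • h := by
      have := hu0; rw [hu] at this
      have : x - (g + α • h) = 0 := this
      have := sub_eq_zero.mp this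
      rw [this]; abel
    have hfun : ∀ a : ℝ, ‖x - (g + a • h)‖ = |α - a| * ‖h‖ := by
      intro a
      have : x - (g + a • h) = (α - a) • h := by
        rw [sub_smul, ← hxg]; abel
      rw [this, norm_smul, Real.norm_eq_abs]
    have hval : (-(φ ‖u‖ * (inner ℝ u h : ℝ))) = 0 := by
      rw [hu0]; simp
    rw [show (fun a : ℝ => ρ ‖x - (g + a • h)‖) = fun a => ρ (|α - a| * ‖h‖) from
      funext fun a => by rw [hfun a], hval]
    by_cases hh : h = 0
    · simp only [hh, norm_zero, mul_zero]
      simpa [hρ0] using hasDerivAt_const α (ρ 0)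
    · have hhpos : 0 < ‖h‖ := norm_pos_iff.mpr hh
      rw [hasDerivAt_iff_tendsto_slope]
      rw [tendsto_zero_iff_norm_tendsto_zero]
      have key : Tendsto (fun a : ℝ => |ρ (|α - a| * ‖h‖)| / (|α - a| * ‖h‖) * ‖h‖)
          (nhdsWithin α {α}ᶜ) (nhds 0) := by
        have h1 : Tendsto (fun a : ℝ => |α - a| * ‖h‖) (nhdsWithin α {α}ᶜ)
            (nhdsWithin 0 (Set.Ioi 0)) := by
          apply tendsto_nhdsWithin_of_tendsto_nhds_of_eventually_within
          · have : Tendsto (fun a : ℝ => |α - a| * ‖h‖) (nhds α) (nhds (|α - α| * ‖h‖)) := by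
              exact ((continuous_const.sub continuous_id).abs.mul continuous_const).tendsto α
            simpa using this.mono_left nhdsWithin_le_nhds
          · filter_upwards [self_mem_nhdsWithin] with a ha
            have : α - a ≠ 0 := sub_ne_zero.mpr (Ne.symm ha)
            exact mul_pos (abs_pos.mpr this) hhpos
        have h2 : Tendsto (fun t : ℝ => |ρ t| / t) (nhdsWithin 0 (Set.Ioi 0)) (nhds 0) := by
          have := hρlim.abs
          simp only [abs_zero] at this
          refine this.congr' ?_
          filter_upwards [self_mem_nhdsWithin] with t ht
          rw [abs_div, abs_of_pos (show (0:ℝ) < t from ht)]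
        have := (h2.comp h1).mul_const ‖h‖
        simpa using this
      refine key.congr' ?_
      filter_upwards [self_mem_nhdsWithin] with a ha
      have hαa : α - a ≠ 0 := sub_ne_zero.mpr (Ne.symm ha)
      have habs : (0:ℝ) < |α - a| := abs_pos.mpr hαa
      rw [slope_def_field]
      simp only [sub_self, abs_zero, zero_mul, hρ0, sub_zero]
      rw [Real.norm_eq_abs, abs_div, abs_sub_comm a α]
      have hne1 : |α - a| ≠ 0 := habs.ne'
      have hne2 : ‖h‖ ≠ 0 := hhpos.ne'
      field_simp
  · -- nondegenerate case
    have hun : 0 < ‖u‖ := norm_pos_iff.mpr hu0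
    have hsq : HasDerivAt (fun a : ℝ => ‖x - (g + a • h)‖ ^ 2)
        (2 * (inner ℝ u (-h) : ℝ)) α := hF.norm_sq
    have hsqrt : HasDerivAt Real.sqrt (1 / (2 * Real.sqrt (‖u‖ ^ 2))) (‖u‖ ^ 2) :=
      Real.hasDerivAt_sqrt (by positivity)
    have hnorm : HasDerivAt (fun a : ℝ => ‖x - (g + a • h)‖)
        ((1 / (2 * ‖u‖)) * (2 * (inner ℝ u (-h) : ℝ))) α := by
      have := hsqrt.comp α hsq
      rw [Real.sqrt_sq hun.le] at this
      refine this.congr_of_eventuallyEq ?_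
      filter_upwards with a
      rw [Function.comp_apply, Real.sqrt_sq (norm_nonneg _)]
    have hρ' : HasDerivAt ρ (ψ ‖u‖) ‖u‖ := hderiv _ hun
    have := hρ'.comp α hnorm
    refine this.congr_deriv ?_
    rw [hφdef _ hun, inner_neg_right]
    field_simp
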